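/- arXiv:1812.06588 — 4 statements merged into one kernel-verified Lean document; each statement's English description precedes it below -/
import Mathlib

section
/- Let μ ≥ 0, ν² ≥ 0 with δ := (μ-1)² - 4ν² ≥ 0, and let n ≥ 1. Define V(t,x) := (1+t)^{(μ+1+√δ)/2}·((1+t)² - |x|²)^{-(n+√δ)/2} on the region Q := {(t,x) ∈ [0,∞)×ℝⁿ : |x| < 1+t}. Then for every x ∈ ℝⁿ with |x| < 1, μ·V(0,x) - ∂ₜV(0,x) = (1-|x|²)^{-(n+√δ)/2 - 1}·( n + (μ-1+√δ)/2 + ((1-μ+√δ)/2)·|x|² ), and in particular μ·V(0,x) - ∂ₜV(0,x) ≥ 0 for all |x| < 1. -/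
theorem stmt_14 (n : ℕ) (hn : 1 ≤ n) (μ ν2 : ℝ) (hμ : 0 ≤ μ) (hν : 0 ≤ ν2)
    (δ : ℝ) (hδdef : δ = (μ - 1)^2 - 4 * ν2) (hδ : 0 ≤ δ)
    (V : ℝ → EuclideanSpace ℝ (Fin n) → ℝ)
    (hV : ∀ t : ℝ, ∀ x : EuclideanSpace ℝ (Fin n), -1 < t → ‖x‖ < 1 + t →
      V t x = (1 + t) ^ ((μ + 1 + Real.sqrt δ) / 2)
        * ((1 + t)^2 - ‖x‖^2) ^ (-((n : ℝ) + Real.sqrt δ) / 2)) :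
    ∀ x : EuclideanSpace ℝ (Fin n), ‖x‖ < 1 →
      (μ * V 0 x - deriv (fun t => V t x) 0
          = (1 - ‖x‖^2) ^ (-((n : ℝ) + Real.sqrt δ) / 2 - 1)
            * ((n : ℝ) + (μ - 1 + Real.sqrt δ) / 2
                + ((1 - μ + Real.sqrt δ) / 2) * ‖x‖^2))
      ∧ 0 ≤ μ * V 0 x - deriv (fun t => V t x) 0 := by
  intro x hx
  set s := Real.sqrt δ with hs
  have hs0 : 0 ≤ s := Real.sqrt_nonneg _
  have hs2 : s ^ 2 ≤ (μ - 1) ^ 2 := by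
    have h := Real.sq_sqrt hδ
    rw [← hs] at h
    nlinarith
  have hr0 : (0:ℝ) ≤ ‖x‖ := norm_nonneg x
  have hr1 : (0:ℝ) < 1 - ‖x‖ ^ 2 := by nlinarith
  set r := ‖x‖ with hrdef
  set a := (μ + 1 + s) / 2 with ha
  set b := -((n : ℝ) + s) / 2 with hb
  -- eventual equality near 0
  have hev : (fun t => V t x) =ᶠ[nhds (0:ℝ)]
      (fun t => (1 + t) ^ a * ((1 + t) ^ 2 - r ^ 2) ^ b) := by
    have hopen : Set.Ioo (r - 1) (1:ℝ) ∈ nhds (0:ℝ) :=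
      Ioo_mem_nhds (by linarith) one_pos
    filter_upwards [hopen] with t ht
    exact hV t x (by linarith [ht.1]) (by linarith [ht.1])
  have h1 : HasDerivAt (fun t : ℝ => 1 + t) 1 0 := by
    simpa using (hasDerivAt_id (0:ℝ)).const_add 1
  have h2 : HasDerivAt (fun t : ℝ => (1 + t) ^ a) a 0 := by
    have := h1.rpow_const (p := a) (Or.inl (by norm_num))
    norm_num [Real.one_rpow] at this
    exact this
  have h3 : HasDerivAt (fun t : ℝ => (1 + t) ^ 2 - r ^ 2) 2 0 := by
    have := (h1.pow 2).sub_const (r ^ 2)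
    norm_num at this
    exact this.sub_const (r ^ 2)
  have hne : (1:ℝ) + 0 = 1 := by norm_num
  have h4 : HasDerivAt (fun t : ℝ => ((1 + t) ^ 2 - r ^ 2) ^ b)
      (2 * b * (1 - r ^ 2) ^ (b - 1)) 0 := by
    have := h3.rpow_const (p := b) (Or.inl (by norm_num; nlinarith))
    norm_num at this
    exact this
  have hprod : HasDerivAt (fun t : ℝ => (1 + t) ^ a * ((1 + t) ^ 2 - r ^ 2) ^ b)
      (a * (1 - r ^ 2) ^ b + 2 * b * (1 - r ^ 2) ^ (b - 1)) 0 := by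
    have := h2.mul h4
    norm_num [Real.one_rpow] at this
    exact this
  have hderiv : deriv (fun t => V t x) 0
      = a * (1 - r ^ 2) ^ b + 2 * b * (1 - r ^ 2) ^ (b - 1) := by
    rw [hev.deriv_eq]
    exact hprod.deriv
  have hV0 : V 0 x = (1 - r ^ 2) ^ b := by
    have := hV 0 x (by norm_num) (by simpa using hx)
    simpa [Real.one_rpow, ← hrdef, ← ha, ← hb] using this
  have hsplit : (1 - r ^ 2) ^ b = (1 - r ^ 2) ^ (b - 1) * (1 - r ^ 2) := by
    rw [← Real.rpow_add_one (ne_of_gt hr1) (b - 1)]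
    ring_nf
  have hbracket : (0:ℝ) ≤ (n : ℝ) + (μ - 1 + s) / 2 + ((1 - μ + s) / 2) * r ^ 2 := by
    have hn' : (1:ℝ) ≤ (n : ℝ) := by exact_mod_cast hn
    rcases le_or_gt (1 - μ + s) 0 with h | h
    · nlinarith [mul_nonneg hr1.le (neg_nonneg.2 h)]
    · nlinarith [mul_nonneg h.le (sq_nonneg r)]
  have hpow : (0:ℝ) < (1 - r ^ 2) ^ (b - 1) := Real.rpow_pos_of_pos hr1 _
  have key : μ * V 0 x - deriv (fun t => V t x) 0
      = (1 - r ^ 2) ^ (b - 1)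
        * ((n : ℝ) + (μ - 1 + s) / 2 + ((1 - μ + s) / 2) * r ^ 2) := by
    rw [hV0, hderiv, hsplit]
    generalize (1 - r ^ 2) ^ (b - 1) = P
    rw [ha, hb]
    ring
  have hexp : -((n : ℝ) + s) / 2 - 1 = b - 1 := by rw [hb]
  constructor
  · rw [key, hexp]
  · rw [key]
    exact mul_nonneg hpow.le hbracket
end

section
/- Let μ ≥ 0, ν² ≥ 0 with δ := (μ-1)² - 4ν² ≥ 0, and n ≥ 1. Define V(t,x) := (1+t)^{(μ+1+√δ)/2}·((1+t)² - |x|²)^{-(n+√δ)/2} for |x| < 1+t. Then V solves the adjoint equation ∂ₜ²V - ΔV - ∂ₜ(μ/(1+t)·V) + (ν²/(1+t)²)·V = 0 on the interior of the light cone {(t,x) : t > 0, |x| < 1+t}. -/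
/-- The Laplacian of `f : ℝⁿ → ℝ` at `x`, as the sum of second partial
derivatives in the coordinate directions. -/
noncomputable def euclideanLaplacian (n : ℕ) (f : EuclideanSpace ℝ (Fin n) → ℝ)
    (x : EuclideanSpace ℝ (Fin n)) : ℝ :=
  ∑ i : Fin n,
    fderiv ℝ (fun y => fderiv ℝ f y (EuclideanSpace.single i 1)) x
      (EuclideanSpace.single i 1)

private lemma aux1 (a b q : ℝ) {r : ℝ} (h1 : 0 < 1 + r) (h2 : q < (1+r)^2) :
    HasDerivAt (fun u : ℝ => (1+u) ^ a * ((1+u)^2 - q) ^ (-b))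
      (a * (1+r) ^ (a-1) * ((1+r)^2 - q) ^ (-b)
        - 2 * b * (1+r) ^ a * (1+r) * ((1+r)^2 - q) ^ (-b-1)) r := by
  have hT : HasDerivAt (fun u : ℝ => 1 + u) 1 r := by
    simpa using (hasDerivAt_id r).const_add (1 : ℝ)
  have hP : HasDerivAt (fun u : ℝ => (1+u)^2 - q) (2*(1+r)) r := by
    have := (hT.pow 2).sub_const q
    simpa [mul_comm] using this
  have hPpos : (0:ℝ) < (1+r)^2 - q := sub_pos.mpr h2
  have hA : HasDerivAt (fun u : ℝ => (1+u) ^ a) (1 * a * (1+r) ^ (a-1)) r :=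
    hT.rpow_const (Or.inl h1.ne')
  have hB : HasDerivAt (fun u : ℝ => ((1+u)^2 - q) ^ (-b))
      ((2*(1+r)) * (-b) * ((1+r)^2-q) ^ (-b-1)) r :=
    hP.rpow_const (Or.inl hPpos.ne')
  have := hA.fun_mul hB
  refine this.congr_deriv ?_
  ring
private lemma aux2 (a b q : ℝ) {r : ℝ} (h1 : 0 < 1 + r) (h2 : q < (1+r)^2) :
    HasDerivAt (fun u : ℝ => a * (1+u) ^ (a-1) * ((1+u)^2 - q) ^ (-b)
        - 2 * b * (1+u) ^ a * (1+u) * ((1+u)^2 - q) ^ (-b-1))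
      (a * (a-1) * (1+r) ^ (a-2) * ((1+r)^2 - q) ^ (-b)
        - (4*a*b*(1+r) ^ (a-1) * (1+r) + 2*b*(1+r) ^ a) * ((1+r)^2 - q) ^ (-b-1)
        + 4*b*(b+1)*(1+r) ^ a * (1+r)^2 * ((1+r)^2 - q) ^ (-b-2)) r := by
  have hT : HasDerivAt (fun u : ℝ => 1 + u) 1 r := by
    simpa using (hasDerivAt_id r).const_add (1 : ℝ)
  have hP : HasDerivAt (fun u : ℝ => (1+u)^2 - q) (2*(1+r)) r := by
    have := (hT.pow 2).sub_const q
    simpa [mul_comm] using this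
  have hPpos : (0:ℝ) < (1+r)^2 - q := sub_pos.mpr h2
  have hA1 : HasDerivAt (fun u : ℝ => (1+u) ^ (a-1)) (1 * (a-1) * (1+r) ^ (a-1-1)) r :=
    hT.rpow_const (Or.inl h1.ne')
  have hA : HasDerivAt (fun u : ℝ => (1+u) ^ a) (1 * a * (1+r) ^ (a-1)) r :=
    hT.rpow_const (Or.inl h1.ne')
  have hB : HasDerivAt (fun u : ℝ => ((1+u)^2 - q) ^ (-b))
      ((2*(1+r)) * (-b) * ((1+r)^2-q) ^ (-b-1)) r :=
    hP.rpow_const (Or.inl hPpos.ne')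
  have hB1 : HasDerivAt (fun u : ℝ => ((1+u)^2 - q) ^ (-b-1))
      ((2*(1+r)) * (-b-1) * ((1+r)^2-q) ^ (-b-1-1)) r :=
    hP.rpow_const (Or.inl hPpos.ne')
  have ht1 := (hA1.const_mul a).fun_mul hB
  have ht2 := (((hA.const_mul (2*b)).fun_mul hT)).fun_mul hB1
  have := ht1.fun_sub ht2
  refine this.congr_deriv ?_
  rw [show a - 1 - 1 = a - 2 by ring, show -b - 1 - 1 = -b - 2 by ring]
  ring
private lemma aux3 (μ a b q : ℝ) {r : ℝ} (h1 : 0 < 1 + r) (h2 : q < (1+r)^2) :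
    HasDerivAt (fun u : ℝ => μ/(1+u) * ((1+u) ^ a * ((1+u)^2 - q) ^ (-b)))
      (-(μ/(1+r)^2) * ((1+r) ^ a * ((1+r)^2 - q) ^ (-b))
        + μ/(1+r) * (a * (1+r) ^ (a-1) * ((1+r)^2 - q) ^ (-b)
          - 2 * b * (1+r) ^ a * (1+r) * ((1+r)^2 - q) ^ (-b-1))) r := by
  have hT : HasDerivAt (fun u : ℝ => 1 + u) 1 r := by
    simpa using (hasDerivAt_id r).const_add (1 : ℝ)
  have hdiv : HasDerivAt (fun u : ℝ => μ/(1+u)) (-(μ/(1+r)^2)) r := by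
    have := (hasDerivAt_const r μ).fun_div hT h1.ne'
    refine this.congr_deriv ?_
    ring
  have := hdiv.fun_mul (aux1 a b q h1 h2)
  convert this using 1
private lemma lap_aux (n : ℕ) (c b R : ℝ) (f : EuclideanSpace ℝ (Fin n) → ℝ)
    (x : EuclideanSpace ℝ (Fin n)) (hR : 0 < R) (hx : ‖x‖ < R)
    (hf : ∀ y : EuclideanSpace ℝ (Fin n), ‖y‖ < R → f y = c * (R^2 - ‖y‖^2) ^ (-b)) :
    euclideanLaplacian n f x
      = 2*b*c*(n:ℝ)*(R^2-‖x‖^2)^(-b-1) + 4*b*(b+1)*c*‖x‖^2*(R^2-‖x‖^2)^(-b-2) := by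
  have hO : IsOpen (Metric.ball (0 : EuclideanSpace ℝ (Fin n)) R) := Metric.isOpen_ball
  have hxO : x ∈ Metric.ball (0 : EuclideanSpace ℝ (Fin n)) R := by
    simpa [mem_ball_zero_iff] using hx
  -- directional derivatives
  have happ : ∀ y ∈ Metric.ball (0 : EuclideanSpace ℝ (Fin n)) R, ∀ i : Fin n,
      fderiv ℝ f y (EuclideanSpace.single i 1)
        = (2*b*c) * ((R^2 - ‖y‖^2) ^ (-b-1) * (y i)) := by
    intro y hy i
    have hyR : ‖y‖ < R := by simpa [mem_ball_zero_iff] using hy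
    have hwpos : (0:ℝ) < R^2 - ‖y‖^2 := by nlinarith [norm_nonneg y]
    have hq : HasFDerivAt (fun z : EuclideanSpace ℝ (Fin n) => ‖z‖^2)
        (2 • innerSL ℝ y) y := (hasStrictFDerivAt_norm_sq y).hasFDerivAt
    have hw := hq.const_sub (R^2)
    have hrp := hw.rpow_const (p := -b) (Or.inl hwpos.ne')
    have hDh := hrp.const_mul c
    have hev : f =ᶠ[nhds y] (fun z => c * (R^2 - ‖z‖^2) ^ (-b)) := by
      filter_upwards [hO.mem_nhds hy] with z hz
      exact hf z (by simpa [mem_ball_zero_iff] using hz)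
    rw [hev.fderiv_eq, hDh.fderiv]
    have h1 : (innerSL ℝ y) (EuclideanSpace.single i 1) = y i := by
      simp [EuclideanSpace.inner_single_right]
    simp only [ContinuousLinearMap.smul_apply, ContinuousLinearMap.neg_apply,
      ContinuousLinearMap.coe_smul', Pi.smul_apply, h1, smul_eq_mul, nsmul_eq_mul]
    push_cast
    rw [show -b - 1 = (-b) - 1 by ring]
    ring
  -- second directional derivative
  have hsec : ∀ i : Fin n,
      fderiv ℝ (fun y => fderiv ℝ f y (EuclideanSpace.single i 1)) x
        (EuclideanSpace.single i 1)
      = (2*b*c) * ((R^2 - ‖x‖^2) ^ (-b-1)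
          + (b+1) * (R^2 - ‖x‖^2) ^ (-b-2) * (2 * (x i * x i))) := by
    intro i
    have hev : (fun y => fderiv ℝ f y (EuclideanSpace.single i 1))
        =ᶠ[nhds x] (fun y => (2*b*c) * ((R^2 - ‖y‖^2) ^ (-b-1) * (y i))) := by
      filter_upwards [hO.mem_nhds hxO] with z hz
      exact happ z hz i
    rw [hev.fderiv_eq]
    have hwpos : (0:ℝ) < R^2 - ‖x‖^2 := by nlinarith [norm_nonneg x]
    have hq : HasFDerivAt (fun z : EuclideanSpace ℝ (Fin n) => ‖z‖^2)
        (2 • innerSL ℝ x) x := (hasStrictFDerivAt_norm_sq x).hasFDerivAt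
    have hw := hq.const_sub (R^2)
    have hrp2 := hw.rpow_const (p := -b-1) (Or.inl hwpos.ne')
    have hproj : HasFDerivAt (fun z : EuclideanSpace ℝ (Fin n) => z i)
        (EuclideanSpace.proj (𝕜 := ℝ) i) x := (EuclideanSpace.proj (𝕜 := ℝ) i).hasFDerivAt
    have hmul := (hrp2.fun_mul hproj).const_mul (2*b*c)
    rw [hmul.fderiv]
    have h1 : (innerSL ℝ x) (EuclideanSpace.single i 1) = x i := by
      simp [EuclideanSpace.inner_single_right]
    have h2 : (EuclideanSpace.proj (𝕜 := ℝ) i) (EuclideanSpace.single i 1) = 1 := by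
      simp [EuclideanSpace.single_apply]
    simp only [ContinuousLinearMap.smul_apply, ContinuousLinearMap.add_apply,
      ContinuousLinearMap.neg_apply, ContinuousLinearMap.coe_smul', Pi.smul_apply,
      smul_eq_mul, nsmul_eq_mul, h1, h2]
    push_cast
    rw [show -b - 1 - 1 = -b - 2 by ring]
    ring
  -- sum up
  have hsum : ‖x‖^2 = ∑ i : Fin n, (x i)^2 := by
    rw [EuclideanSpace.norm_eq, Real.sq_sqrt (by positivity)]
    simp [sq_abs]
  rw [euclideanLaplacian]
  rw [Finset.sum_congr rfl (fun i _ => hsec i)]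
  simp only [mul_add, Finset.sum_add_distrib, Finset.sum_const, Finset.card_univ,
    Fintype.card_fin, nsmul_eq_mul]
  rw [← Finset.mul_sum, ← Finset.mul_sum]
  rw [hsum]
  have h2 : ∑ i : Fin n, 2 * (x i * x i) = 2 * ∑ i : Fin n, (x i)^2 := by
    rw [Finset.mul_sum]; exact Finset.sum_congr rfl (fun i _ => by ring)
  rw [h2]
  ring

theorem stmt_15 (n : ℕ) (hn : 1 ≤ n) (μ ν2 : ℝ) (hμ : 0 ≤ μ) (hν : 0 ≤ ν2)
    (δ : ℝ) (hδdef : δ = (μ - 1)^2 - 4 * ν2) (hδ : 0 ≤ δ)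
    (V : ℝ → EuclideanSpace ℝ (Fin n) → ℝ)
    (hV : ∀ t : ℝ, ∀ x : EuclideanSpace ℝ (Fin n), -1 < t → ‖x‖ < 1 + t →
      V t x = (1 + t) ^ ((μ + 1 + Real.sqrt δ) / 2)
        * ((1 + t)^2 - ‖x‖^2) ^ (-((n : ℝ) + Real.sqrt δ) / 2)) :
    ∀ t : ℝ, ∀ x : EuclideanSpace ℝ (Fin n), 0 < t → ‖x‖ < 1 + t →
      deriv (fun s => deriv (fun r => V r x) s) t
        - euclideanLaplacian n (fun y => V t y) x
        - deriv (fun s => (μ / (1 + s)) * V s x) t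
        + (ν2 / (1 + t)^2) * V t x = 0 := by
  intro t x ht hx
  have ht1 : (0:ℝ) < 1 + t := by linarith
  set s := Real.sqrt δ with hs
  have hs2 : s^2 = (μ-1)^2 - 4*ν2 := by rw [hs, Real.sq_sqrt hδ, hδdef]
  set a := (μ + 1 + s)/2 with ha
  set b := ((n:ℝ) + s)/2 with hb
  have hVeq : ∀ r : ℝ, ∀ y : EuclideanSpace ℝ (Fin n), -1 < r → ‖y‖ < 1 + r →
      V r y = (1+r) ^ a * ((1+r)^2 - ‖y‖^2) ^ (-b) := by
    intro r y h1 h2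
    rw [hV r y h1 h2, ha, hb, neg_div]
  set U : Set ℝ := Set.Ioi (max (-1) (‖x‖ - 1)) with hUdef
  have hUopen : IsOpen U := isOpen_Ioi
  have htU : t ∈ U := by
    simp only [hUdef, Set.mem_Ioi, max_lt_iff]
    constructor <;> linarith
  have hUprop : ∀ r ∈ U, 0 < 1 + r ∧ ‖x‖^2 < (1+r)^2 ∧ -1 < r ∧ ‖x‖ < 1 + r := by
    intro r hr
    simp only [hUdef, Set.mem_Ioi, max_lt_iff] at hr
    have h1 : -1 < r := hr.1
    have h2 : ‖x‖ < 1 + r := by linarith [hr.2]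
    refine ⟨by linarith, ?_, h1, h2⟩
    have := norm_nonneg x
    nlinarith
  have hg : ∀ r ∈ U, V r x = (1+r) ^ a * ((1+r)^2 - ‖x‖^2) ^ (-b) := by
    intro r hr
    obtain ⟨_, _, h3, h4⟩ := hUprop r hr
    exact hVeq r x h3 h4
  -- first time derivative on U
  have hderiv1 : ∀ r ∈ U, deriv (fun u => V u x) r
      = a * (1+r) ^ (a-1) * ((1+r)^2 - ‖x‖^2) ^ (-b)
        - 2 * b * (1+r) ^ a * (1+r) * ((1+r)^2 - ‖x‖^2) ^ (-b-1) := by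
    intro r hr
    obtain ⟨h1, h2, _, _⟩ := hUprop r hr
    have hev : (fun u => V u x) =ᶠ[nhds r]
        (fun u => (1+u) ^ a * ((1+u)^2 - ‖x‖^2) ^ (-b)) := by
      filter_upwards [hUopen.mem_nhds hr] with z hz using hg z hz
    rw [hev.deriv_eq]
    exact (aux1 a b (‖x‖^2) h1 h2).deriv
  obtain ⟨hT1, hQ2, _, _⟩ := hUprop t htU
  -- second time derivative
  have D1 : deriv (fun u => deriv (fun r => V r x) u) t
      = a * (a-1) * (1+t) ^ (a-2) * ((1+t)^2 - ‖x‖^2) ^ (-b)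
        - (4*a*b*(1+t) ^ (a-1) * (1+t) + 2*b*(1+t) ^ a) * ((1+t)^2 - ‖x‖^2) ^ (-b-1)
        + 4*b*(b+1)*(1+t) ^ a * (1+t)^2 * ((1+t)^2 - ‖x‖^2) ^ (-b-2) := by
    have hev : (fun u => deriv (fun r => V r x) u) =ᶠ[nhds t]
        (fun u => a * (1+u) ^ (a-1) * ((1+u)^2 - ‖x‖^2) ^ (-b)
          - 2 * b * (1+u) ^ a * (1+u) * ((1+u)^2 - ‖x‖^2) ^ (-b-1)) := by
      filter_upwards [hUopen.mem_nhds htU] with z hz using hderiv1 z hz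
    rw [hev.deriv_eq]
    exact (aux2 a b (‖x‖^2) hT1 hQ2).deriv
  -- damping derivative
  have D3 : deriv (fun u => (μ / (1 + u)) * V u x) t
      = -(μ/(1+t)^2) * ((1+t) ^ a * ((1+t)^2 - ‖x‖^2) ^ (-b))
        + μ/(1+t) * (a * (1+t) ^ (a-1) * ((1+t)^2 - ‖x‖^2) ^ (-b)
          - 2 * b * (1+t) ^ a * (1+t) * ((1+t)^2 - ‖x‖^2) ^ (-b-1)) := by
    have hev : (fun u => (μ / (1 + u)) * V u x) =ᶠ[nhds t]
        (fun u => μ/(1+u) * ((1+u) ^ a * ((1+u)^2 - ‖x‖^2) ^ (-b))) := by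
      filter_upwards [hUopen.mem_nhds htU] with z hz
      rw [hg z hz]
    rw [hev.deriv_eq]
    exact (aux3 μ a b (‖x‖^2) hT1 hQ2).deriv
  -- Laplacian
  have D2 : euclideanLaplacian n (fun y => V t y) x
      = 2*b*((1+t) ^ a)*(n:ℝ)*((1+t)^2-‖x‖^2) ^ (-b-1)
        + 4*b*(b+1)*((1+t) ^ a)*‖x‖^2*((1+t)^2-‖x‖^2) ^ (-b-2) := by
    refine lap_aux n ((1+t) ^ a) b (1+t) _ x ht1 hx ?_
    intro y hy
    exact hVeq t y (by linarith) hy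
  have D4 : V t x = (1+t) ^ a * ((1+t)^2 - ‖x‖^2) ^ (-b) := hg t htU
  rw [D1, D2, D3, D4]
  -- power bookkeeping
  have hPpos : (0:ℝ) < (1+t)^2 - ‖x‖^2 := sub_pos.mpr hQ2
  have e1 : (1+t) ^ (a-1) = (1+t) ^ (a-2) * (1+t) := by
    conv_lhs => rw [show a-1 = (a-2)+1 by ring]
    rw [Real.rpow_add_one ht1.ne']
  have e2 : (1+t) ^ a = (1+t) ^ (a-2) * (1+t) * (1+t) := by
    conv_lhs => rw [show a = ((a-2)+1)+1 by ring]
    rw [Real.rpow_add_one ht1.ne', Real.rpow_add_one ht1.ne']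
  have p1 : ((1+t)^2-‖x‖^2) ^ (-b-1) = ((1+t)^2-‖x‖^2) ^ (-b-2) * ((1+t)^2-‖x‖^2) := by
    conv_lhs => rw [show -b-1 = (-b-2)+1 by ring]
    rw [Real.rpow_add_one hPpos.ne']
  have p2 : ((1+t)^2-‖x‖^2) ^ (-b) = ((1+t)^2-‖x‖^2) ^ (-b-2) * ((1+t)^2-‖x‖^2) * ((1+t)^2-‖x‖^2) := by
    conv_lhs => rw [show -b = ((-b-2)+1)+1 by ring]
    rw [Real.rpow_add_one hPpos.ne', Real.rpow_add_one hPpos.ne']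
  rw [e2, e1, p2, p1]
  generalize ((1+t) : ℝ) ^ (a-2) = A
  generalize (((1+t)^2-‖x‖^2) : ℝ) ^ (-b-2) = B
  rw [ha, hb]
  have hTne : (1+t) ≠ 0 := ht1.ne'
  field_simp
  linear_combination (A * B * ((1+t)^2-‖x‖^2)^2) * hs2
end

section
/- Let n ≥ 1, μ ∈ ℝ, p > 1, and let β > (n-μ+1)/2 + 1 - 1/p. Let r₀ ∈ (0,1) and p' := p/(p-1). Then there exists a constant C > 0 such that for all R ≥ 2, ∫_{R/2}^{R} (1+t)^{-((n-μ-1)/2)p'} (r₀+t)^{n-1} ( ∫_0^{r₀+t} (1+t-r)^{((n-μ+1)/2 - β)p'} dr ) dt ≤ C · R^{-((n-μ-1)/2)p' + n}. -/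
theorem stmt_16 (n μ p β r₀ : ℝ) (hn : 1 ≤ n) (hp : 1 < p)
    (hβ : (n - μ + 1) / 2 + 1 - 1 / p < β) (hr₀ : r₀ ∈ Set.Ioo (0 : ℝ) 1)
    (p' : ℝ) (hp' : p' = p / (p - 1)) :
    ∃ C : ℝ, 0 < C ∧ ∀ R : ℝ, 2 ≤ R →
      (∫ t in (R / 2)..R,
          (1 + t) ^ (-((n - μ - 1) / 2) * p') * (r₀ + t) ^ (n - 1)
            * ∫ r in (0:ℝ)..(r₀ + t), (1 + t - r) ^ (((n - μ + 1) / 2 - β) * p'))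
        ≤ C * R ^ (-((n - μ - 1) / 2) * p' + n) := by
  obtain ⟨hr0, hr1⟩ := hr₀
  set e : ℝ := -((n - μ - 1) / 2) * p' with he
  set c : ℝ := ((n - μ + 1) / 2 - β) * p' with hc
  have hp0 : (0:ℝ) < p := lt_trans one_pos hp
  have hp1 : (0:ℝ) < p - 1 := by linarith
  have hp'pos : 0 < p' := by rw [hp']; positivity
  -- key exponent fact : c < -1
  have hclt : c < -1 := by
    have h1 : (n - μ + 1) / 2 - β < 1 / p - 1 := by linarith
    have h2 : c < (1 / p - 1) * p' := by
      rw [hc]; exact mul_lt_mul_of_pos_right h1 hp'pos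
    have h3 : (1 / p - 1) * p' = -1 := by
      rw [hp']; field_simp; ring
    linarith [h2, h3.le]
  have hc1 : c + 1 < 0 := by linarith
  have hr₀' : (0:ℝ) < 1 - r₀ := by linarith
  -- constants
  set M1 : ℝ := max ((1/2 : ℝ) ^ e) ((3/2 : ℝ) ^ e) with hM1
  have hM1pos : 0 < M1 := lt_max_of_lt_left (Real.rpow_pos_of_pos (by norm_num) e)
  set M2 : ℝ := (3/2 : ℝ) ^ (n - 1) with hM2
  have hM2pos : 0 < M2 := Real.rpow_pos_of_pos (by norm_num) _
  set M3 : ℝ := (1 - r₀) ^ (c + 1) / (-(c + 1)) with hM3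
  have hM3pos : 0 < M3 := div_pos (Real.rpow_pos_of_pos hr₀' _) (by linarith)
  refine ⟨M1 * M2 * M3 / 2, by positivity, ?_⟩
  intro R hR
  have hRpos : (0:ℝ) < R := by linarith
  have hhalf : R / 2 ≤ R := by linarith
  -- inner integral formula
  have inner_eq : ∀ t ∈ Set.Icc (R/2) R,
      (∫ r in (0:ℝ)..(r₀ + t), (1 + t - r) ^ c)
        = ((1 + t) ^ (c+1) - (1 - r₀) ^ (c+1)) / (c+1) := by
    intro t ht
    have ht1 : (1:ℝ) ≤ t := by
      have := ht.1; linarith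
    have h1 : (∫ r in (0:ℝ)..(r₀ + t), (1 + t - r) ^ c)
        = ∫ u in ((1+t) - (r₀ + t))..((1+t) - 0), u ^ c := by
      exact intervalIntegral.integral_comp_sub_left (fun u => u ^ c) (1 + t)
    rw [h1]
    have h2 : (1 + t) - (r₀ + t) = 1 - r₀ := by ring
    have h3 : (1 + t) - (0:ℝ) = 1 + t := by ring
    rw [h2, h3, integral_rpow]
    right
    exact ⟨by linarith, Set.notMem_uIcc_of_lt hr₀' (by linarith)⟩
  -- the closed-form integrand
  set G : ℝ → ℝ := fun t =>
    (1 + t) ^ e * (r₀ + t) ^ (n - 1) * (((1 + t) ^ (c+1) - (1 - r₀) ^ (c+1)) / (c+1))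
    with hG
  have hInt : (∫ t in (R / 2)..R,
      (1 + t) ^ e * (r₀ + t) ^ (n - 1) * ∫ r in (0:ℝ)..(r₀ + t), (1 + t - r) ^ c)
      = ∫ t in (R / 2)..R, G t := by
    apply intervalIntegral.integral_congr
    intro t ht
    rw [Set.uIcc_of_le hhalf] at ht
    rw [hG]
    simp only []
    rw [inner_eq t ht]
  rw [hInt]
  -- continuity hence integrability of G
  have hbase : ∀ x : ℝ, ∀ t ∈ Set.Icc (R/2) R, 1 + t ≠ 0 ∨ 0 ≤ x := by
    intro x t ht; left; exact ne_of_gt (by linarith [ht.1])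
  have hbase2 : ∀ t ∈ Set.Icc (R/2) R, r₀ + t ≠ 0 ∨ 0 ≤ n - 1 := by
    intro t ht; right; linarith
  have hGcont : ContinuousOn G (Set.uIcc (R/2) R) := by
    rw [Set.uIcc_of_le hhalf]
    apply ContinuousOn.mul
    · apply ContinuousOn.mul
      · exact (continuousOn_const.add continuousOn_id).rpow_const (hbase e)
      · exact (continuousOn_const.add continuousOn_id).rpow_const hbase2
    · exact (((continuousOn_const.add continuousOn_id).rpow_const
        (hbase (c+1))).sub continuousOn_const).div_const _
  have hGint : IntervalIntegrable G MeasureTheory.volume (R/2) R :=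
    hGcont.intervalIntegrable
  -- pointwise bound
  have hbound : ∀ t ∈ Set.Icc (R/2) R, G t ≤ M1 * M2 * M3 * R ^ (e + n - 1) := by
    intro t ht
    obtain ⟨ht1, ht2⟩ := ht
    have htpos : (0:ℝ) < t := by linarith
    have h1t : (0:ℝ) < 1 + t := by linarith
    have hub : 1 + t ≤ 3/2 * R := by linarith
    have hlb : 1/2 * R ≤ 1 + t := by linarith
    -- factor 1
    have hb1 : (1 + t) ^ e ≤ M1 * R ^ e := by
      have key : (1 + t) ^ e = ((1 + t) / R) ^ e * R ^ e := by
        rw [← Real.mul_rpow (by positivity) hRpos.le, div_mul_cancel₀]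
        exact hRpos.ne'
      rw [key]
      apply mul_le_mul_of_nonneg_right _ (Real.rpow_nonneg hRpos.le e)
      have hq1 : (1/2 : ℝ) ≤ (1 + t) / R := by
        rw [le_div_iff₀ hRpos]; linarith
      have hq2 : (1 + t) / R ≤ 3/2 := by
        rw [div_le_iff₀ hRpos]; linarith
      rcases le_or_gt 0 e with hepos | heneg
      · exact le_max_of_le_right (Real.rpow_le_rpow (by positivity) hq2 hepos)
      · exact le_max_of_le_left
          (Real.rpow_le_rpow_of_nonpos (by norm_num) hq1 heneg.le)
    -- factor 2
    have hb2 : (r₀ + t) ^ (n - 1) ≤ M2 * R ^ (n - 1) := by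
      have : (r₀ + t) ^ (n - 1) ≤ (3/2 * R) ^ (n - 1) :=
        Real.rpow_le_rpow (by positivity) (by linarith) (by linarith)
      rwa [Real.mul_rpow (by norm_num) hRpos.le] at this
    -- factor 3
    have hb3 : ((1 + t) ^ (c+1) - (1 - r₀) ^ (c+1)) / (c+1) ≤ M3 := by
      rw [← neg_div_neg_eq, neg_sub, hM3]
      apply div_le_div_of_nonneg_right _ (by linarith)
      have : (0:ℝ) ≤ (1 + t) ^ (c+1) := Real.rpow_nonneg h1t.le _
      linarith
    have hb3nn : 0 ≤ ((1 + t) ^ (c+1) - (1 - r₀) ^ (c+1)) / (c+1) := by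
      have hmono : (1 + t) ^ (c+1) ≤ (1 - r₀) ^ (c+1) :=
        Real.rpow_le_rpow_of_nonpos hr₀' (by linarith) hc1.le
      have hnum : (1 + t) ^ (c+1) - (1 - r₀) ^ (c+1) ≤ 0 := by linarith
      rw [← neg_div_neg_eq]
      exact div_nonneg (by linarith) (by linarith)
    have step : G t ≤ (M1 * R ^ e) * (M2 * R ^ (n-1)) * M3 := by
      rw [hG]
      apply mul_le_mul _ hb3 hb3nn (by positivity)
      exact mul_le_mul hb1 hb2 (Real.rpow_nonneg (by linarith) _) (by positivity)
    refine step.trans_eq ?_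
    have hre : R ^ e * R ^ (n - 1) = R ^ (e + n - 1) := by
      rw [← Real.rpow_add hRpos]; ring_nf
    calc (M1 * R ^ e) * (M2 * R ^ (n-1)) * M3
        = M1 * M2 * M3 * (R ^ e * R ^ (n-1)) := by ring
      _ = M1 * M2 * M3 * R ^ (e + n - 1) := by rw [hre]
  -- integrate the bound
  have hfinal : (∫ t in (R / 2)..R, G t)
      ≤ ∫ _t in (R / 2)..R, M1 * M2 * M3 * R ^ (e + n - 1) := by
    apply intervalIntegral.integral_mono_on hhalf hGint
      intervalIntegrable_const hbound
  calc (∫ t in (R / 2)..R, G t)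
      ≤ ∫ _t in (R / 2)..R, M1 * M2 * M3 * R ^ (e + n - 1) := hfinal
    _ = (R - R/2) * (M1 * M2 * M3 * R ^ (e + n - 1)) := by
        rw [intervalIntegral.integral_const]; simp [smul_eq_mul]
    _ = M1 * M2 * M3 / 2 * (R ^ (e + n - 1) * R) := by ring
    _ = M1 * M2 * M3 / 2 * R ^ (e + n) := by
        rw [← Real.rpow_add_one hRpos.ne']; ring_nf
end

section
/- Let T > 2, R₀ ∈ (2,T), and let y ∈ C¹([R₀,T)) be nonnegative. Suppose there exist θ, K₁, K₂ > 0 and p₁ > 1, p₂ ≥ 1 with p₂ < p₁ + 1 such that R·y'(R) ≥ K₁θ and R·(log R)^{p₂-1}·y'(R) ≥ K₂·(y(R))^{p₁} for all R ∈ (R₀,T). Then there exist θ₀ > 0 and K > 0 (depending only on R₀, K₁, K₂, p₁, p₂) such that for all θ ∈ (0,θ₀), T ≤ exp( K·θ^{-(p₁-1)/(p₁-p₂+1)} ). -/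
set_option maxHeartbeats 1000000

private lemma mono_aux {a b : ℝ} (f f' : ℝ → ℝ) (hab : a ≤ b)
    (hf : ∀ x ∈ Set.Icc a b, HasDerivAt f (f' x) x)
    (h0 : ∀ x ∈ Set.Ioo a b, 0 ≤ f' x) : f a ≤ f b := by
  have hmono : MonotoneOn f (Set.Icc a b) := by
    apply monotoneOn_of_deriv_nonneg (convex_Icc a b)
    · exact fun x hx => ((hf x hx).continuousAt).continuousWithinAt
    · intro x hx
      rw [interior_Icc] at hx
      exact ((hf x (Set.mem_Icc_of_Ioo hx)).differentiableAt).differentiableWithinAt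
    · intro x hx
      rw [interior_Icc] at hx
      rw [(hf x (Set.mem_Icc_of_Ioo hx)).deriv]
      exact h0 x hx
  exact hmono (Set.left_mem_Icc.2 hab) (Set.right_mem_Icc.2 hab) hab

theorem stmt_19 (R₀ K₁ K₂ p₁ p₂ : ℝ) (hR₀ : 2 < R₀)
    (hK₁ : 0 < K₁) (hK₂ : 0 < K₂) (hp₁ : 1 < p₁) (hp₂ : 1 ≤ p₂)
    (hpp : p₂ < p₁ + 1) :
    ∃ θ₀ : ℝ, 0 < θ₀ ∧ ∃ K : ℝ, 0 < K ∧
      ∀ T : ℝ, R₀ < T →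
      ∀ θ : ℝ, 0 < θ → θ < θ₀ →
      ∀ y y' : ℝ → ℝ,
        (∀ R ∈ Set.Ico R₀ T, 0 ≤ y R) →
        (∀ R ∈ Set.Ico R₀ T, HasDerivAt y (y' R) R) →
        ContinuousOn y' (Set.Ico R₀ T) →
        (∀ R ∈ Set.Ioo R₀ T, K₁ * θ ≤ R * y' R) →
        (∀ R ∈ Set.Ioo R₀ T, K₂ * (y R) ^ p₁ ≤ R * (Real.log R) ^ (p₂ - 1) * y' R) →
        T ≤ Real.exp (K * θ ^ (-(p₁ - 1) / (p₁ - p₂ + 1))) := by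
  set q : ℝ := p₁ - p₂ + 1 with hq_def
  have hq : 0 < q := by simp only [hq_def]; linarith
  set α : ℝ := (p₁ - 1) / q with hα_def
  have hα : 0 < α := div_pos (by linarith) hq
  set C : ℝ := (p₁ - 1)⁻¹ * K₂⁻¹ * (2:ℝ) ^ (p₂ - 1) * (K₁ / 2) ^ (1 - p₁) with hC_def
  have hC : 0 < C := by
    apply mul_pos (mul_pos (mul_pos (inv_pos.2 (by linarith)) (inv_pos.2 hK₂)) _) _
    · exact Real.rpow_pos_of_pos two_pos _
    · exact Real.rpow_pos_of_pos (by linarith) _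
  set C' : ℝ := C ^ q⁻¹ with hC'_def
  have hC' : 0 < C' := Real.rpow_pos_of_pos hC _
  set K : ℝ := 2 * (C' + 1) with hK_def
  have hK : 0 < K := by positivity
  have hlogR₀ : 0 < Real.log R₀ := Real.log_pos (by linarith)
  set X' : ℝ := 4 * Real.log R₀ + 2 with hX'_def
  have hX' : 0 < X' := by positivity
  refine ⟨min 1 ((K / X') ^ α⁻¹), lt_min one_pos (Real.rpow_pos_of_pos (by positivity) _),
    K, hK, ?_⟩
  intro T hT θ hθ hθ₀ y y' hy hd _hcd h1 h2
  by_contra hcon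
  push_neg at hcon
  -- basic quantities
  set l : ℝ := θ ^ (-α) with hl_def
  have hl : 0 < l := Real.rpow_pos_of_pos hθ _
  set L : ℝ := K / 2 * l with hL_def
  have hLX : X' / 2 < L := by
    have hθB : θ < (K / X') ^ α⁻¹ := lt_of_lt_of_le hθ₀ (min_le_right _ _)
    have h1' : θ ^ α < ((K / X') ^ α⁻¹) ^ α :=
      Real.rpow_lt_rpow hθ.le hθB hα
    rw [Real.rpow_inv_rpow (by positivity) (ne_of_gt hα)] at h1'
    have h2' : (K / X')⁻¹ < (θ ^ α)⁻¹ :=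
      inv_strictAnti₀ (Real.rpow_pos_of_pos hθ _) h1'
    have h3' : l = (θ ^ α)⁻¹ := by rw [hl_def, Real.rpow_neg hθ.le]
    rw [inv_div] at h2'
    have h4' : K / 2 * (X' / K) < K / 2 * l := by
      apply mul_lt_mul_of_pos_left _ (by positivity)
      rw [h3']; exact h2'
    have h5' : K / 2 * (X' / K) = X' / 2 := by field_simp
    rw [hL_def]; linarith [h4', h5'.symm.le]
  have hLbig : 2 * Real.log R₀ + 1 < L := by
    rw [hX'_def] at hLX; linarith
  have hL : 0 < L := by linarith
  set R₁ : ℝ := Real.exp L with hR₁_def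
  set S : ℝ := Real.exp (2 * L) with hS_def
  have hexp_eq : K * θ ^ (-(p₁ - 1) / (p₁ - p₂ + 1)) = 2 * L := by
    have : -(p₁ - 1) / (p₁ - p₂ + 1) = -α := by
      rw [hα_def, hq_def, neg_div]
    rw [this, hL_def, hl_def]; ring
  have hST : S < T := by rw [hS_def, ← hexp_eq]; exact hcon
  have hR₀R₁ : R₀ < R₁ := by
    rw [hR₁_def, ← Real.exp_log (by linarith : (0:ℝ) < R₀)]
    exact Real.exp_lt_exp.2 (by linarith)
  have hR₁S : R₁ < S := Real.exp_lt_exp.2 (by linarith)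
  have hR₀pos : (0:ℝ) < R₀ := by linarith
  -- positivity of y'
  have hy'pos : ∀ R ∈ Set.Ioo R₀ T, 0 < y' R := by
    intro R hR
    have h := h1 R hR
    have hRpos : 0 < R := lt_trans hR₀pos hR.1
    by_contra hneg
    push_neg at hneg
    have hle : R * y' R ≤ 0 := mul_nonpos_of_nonneg_of_nonpos hRpos.le hneg
    linarith [mul_pos hK₁ hθ]
  -- Step 1 : lower bound for y R₁
  have hstep1 : y R₀ - K₁ * θ * Real.log R₀ ≤ y R₁ - K₁ * θ * Real.log R₁ := by
    apply mono_aux (fun R => y R - K₁ * θ * Real.log R)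
      (fun R => y' R - K₁ * θ * R⁻¹) (le_of_lt hR₀R₁)
    · intro x hx
      have hxmem : x ∈ Set.Ico R₀ T := ⟨hx.1, lt_of_le_of_lt hx.2 (lt_trans hR₁S hST)⟩
      have hx0 : x ≠ 0 := by have := hx.1; intro h; rw [h] at this; linarith
      exact (hd x hxmem).sub ((Real.hasDerivAt_log hx0).const_mul (K₁ * θ))
    · intro x hx
      have hxmem : x ∈ Set.Ioo R₀ T := ⟨hx.1, lt_trans hx.2 (lt_trans hR₁S hST)⟩
      have hxpos : 0 < x := lt_trans hR₀pos hx.1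
      have h := h1 x hxmem
      rw [sub_nonneg, ← div_eq_mul_inv, div_le_iff₀ hxpos]
      linarith [h]
  have hlogR₁ : Real.log R₁ = L := Real.log_exp L
  have hyR₀ : 0 ≤ y R₀ := hy R₀ ⟨le_refl _, hT⟩
  set m : ℝ := K₁ * θ * L / 2 with hm_def
  have hm : 0 < m := by positivity
  have hyR₁ : m ≤ y R₁ := by
    rw [hlogR₁] at hstep1
    have hlog : Real.log R₀ ≤ L / 2 := by linarith
    have hP : 0 < K₁ * θ := mul_pos hK₁ hθ
    have h' : K₁ * θ * Real.log R₀ ≤ K₁ * θ * (L / 2) :=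
      mul_le_mul_of_nonneg_left hlog hP.le
    rw [hm_def]
    linarith
  -- y ≥ m on [R₁, S]
  have hysub : ∀ R ∈ Set.Icc R₁ S, m ≤ y R := by
    intro R hR
    have hmono : y R₁ ≤ y R := by
      apply mono_aux y y' hR.1
      · intro x hx
        exact hd x ⟨le_trans (le_of_lt hR₀R₁) hx.1,
          lt_of_le_of_lt (le_trans hx.2 hR.2) hST⟩
      · intro x hx
        exact (hy'pos x ⟨lt_trans hR₀R₁ hx.1,
          lt_of_lt_of_le (lt_of_lt_of_le hx.2 hR.2) (le_of_lt hST)⟩).le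
    linarith
  have hypos : ∀ R ∈ Set.Icc R₁ S, 0 < y R := fun R hR => lt_of_lt_of_le hm (hysub R hR)
  -- Step 2 : decreasing functional
  set c : ℝ := K₂ * (2 * L) ^ (1 - p₂) with hc_def
  have hcpos : 0 < c := mul_pos hK₂ (Real.rpow_pos_of_pos (by linarith) _)
  have hA : (0:ℝ) < (2 * L) ^ (p₂ - 1) := Real.rpow_pos_of_pos (by linarith) _
  have hstep2 : -((p₁ - 1)⁻¹ * y R₁ ^ (1 - p₁)) - c * Real.log R₁ ≤
      -((p₁ - 1)⁻¹ * y S ^ (1 - p₁)) - c * Real.log S := by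
    apply mono_aux
      (fun R => -((p₁ - 1)⁻¹ * y R ^ (1 - p₁)) - c * Real.log R)
      (fun R => -((p₁ - 1)⁻¹ * (y' R * (1 - p₁) * y R ^ (1 - p₁ - 1))) - c * R⁻¹)
      (le_of_lt hR₁S)
    · intro x hx
      have hxmem : x ∈ Set.Ico R₀ T :=
        ⟨le_trans (le_of_lt hR₀R₁) hx.1, lt_of_le_of_lt hx.2 hST⟩
      have hx0 : x ≠ 0 := by
        have := hx.1
        intro h; rw [h] at this
        have : (0:ℝ) < R₁ := Real.exp_pos _
        linarith [hx.1, this]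
      have hyx : y x ≠ 0 := ne_of_gt (hypos x hx)
      exact (((hd x hxmem).rpow_const (Or.inl hyx)).const_mul ((p₁ - 1)⁻¹)).neg.sub
        ((Real.hasDerivAt_log hx0).const_mul c)
    · intro x hx
      have hxIcc : x ∈ Set.Icc R₁ S := ⟨hx.1.le, hx.2.le⟩
      have hxmem : x ∈ Set.Ioo R₀ T := ⟨lt_trans hR₀R₁ hx.1, lt_trans hx.2 hST⟩
      have hxpos : 0 < x := lt_trans hR₀pos hxmem.1
      have hyx : 0 < y x := hypos x hxIcc
      have hy'x : 0 < y' x := hy'pos x hxmem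
      have hlogx : 0 < Real.log x := by
        apply Real.log_pos; calc (1:ℝ) < R₀ := by linarith
          _ < x := hxmem.1
      have hlogxS : Real.log x ≤ 2 * L := by
        calc Real.log x ≤ Real.log S := Real.log_le_log hxpos hx.2.le
          _ = 2 * L := Real.log_exp _
      have hrle : (Real.log x) ^ (p₂ - 1) ≤ (2 * L) ^ (p₂ - 1) :=
        Real.rpow_le_rpow hlogx.le hlogxS (by linarith)
      have key : K₂ * y x ^ p₁ ≤ x * (2 * L) ^ (p₂ - 1) * y' x := by
        calc K₂ * y x ^ p₁ ≤ x * (Real.log x) ^ (p₂ - 1) * y' x := h2 x hxmem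
          _ ≤ x * (2 * L) ^ (p₂ - 1) * y' x :=
            mul_le_mul_of_nonneg_right
              (mul_le_mul_of_nonneg_left hrle hxpos.le) hy'x.le
      have hY : (0:ℝ) < y x ^ p₁ := Real.rpow_pos_of_pos hyx _
      have hdivle : K₂ / ((2 * L) ^ (p₂ - 1) * x) ≤ y' x / y x ^ p₁ := by
        rw [div_le_div_iff₀ (by positivity) hY]
        linarith [key]
      have hsimp : -((p₁ - 1)⁻¹ * (y' x * (1 - p₁) * y x ^ (1 - p₁ - 1))) =
          y' x / y x ^ p₁ := by
        have he : (1 : ℝ) - p₁ - 1 = -p₁ := by ring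
        rw [he, Real.rpow_neg hyx.le, div_eq_mul_inv]
        have h9 : (p₁ - 1) * (p₁ - 1)⁻¹ = 1 := mul_inv_cancel₀ (by linarith)
        calc -((p₁ - 1)⁻¹ * (y' x * (1 - p₁) * (y x ^ p₁)⁻¹))
            = y' x * (y x ^ p₁)⁻¹ * ((p₁ - 1) * (p₁ - 1)⁻¹) := by ring
          _ = y' x * (y x ^ p₁)⁻¹ := by rw [h9, mul_one]
      have hcx : c * x⁻¹ = K₂ / ((2 * L) ^ (p₂ - 1) * x) := by
        rw [hc_def]
        have : (1 : ℝ) - p₂ = -(p₂ - 1) := by ring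
        rw [this, Real.rpow_neg (by linarith : (0:ℝ) ≤ 2 * L)]
        field_simp
      rw [sub_nonneg, hsimp, hcx]
      exact hdivle
  -- extract the key inequality
  have hlogS : Real.log S = 2 * L := Real.log_exp _
  have hSmem : S ∈ Set.Ico R₀ T := ⟨le_trans hR₀R₁.le hR₁S.le, hST⟩
  have hySnn : 0 ≤ y S ^ (1 - p₁) := Real.rpow_nonneg (hy S hSmem) _
  have hinv₁ : (0:ℝ) < (p₁ - 1)⁻¹ := inv_pos.2 (by linarith)
  have hym : y R₁ ^ (1 - p₁) ≤ m ^ (1 - p₁) :=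
    Real.rpow_le_rpow_of_nonpos hm hyR₁ (by linarith)
  have hstar : c * L ≤ (p₁ - 1)⁻¹ * m ^ (1 - p₁) := by
    rw [hlogR₁, hlogS] at hstep2
    linarith [mul_le_mul_of_nonneg_left hym hinv₁.le, mul_nonneg hinv₁.le hySnn]
  -- turn into L ^ q ≤ C * θ ^ (1 - p₁)
  have hLq : L ^ q ≤ C * θ ^ (1 - p₁) := by
    have hB : (0:ℝ) < L ^ (1 - p₁) := Real.rpow_pos_of_pos hL _
    have e1 : c * L = K₂ * 2 ^ (1 - p₂) * L ^ q * L ^ (1 - p₁) := by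
      have hsplit : ((2:ℝ) * L) ^ (1 - p₂) = 2 ^ (1 - p₂) * L ^ (1 - p₂) :=
        Real.mul_rpow (by norm_num) hL.le
      have hLL : L ^ q * L ^ (1 - p₁) = L ^ (2 - p₂) := by
        rw [← Real.rpow_add hL]
        congr 1
        rw [hq_def]; ring
      have hL2 : L ^ ((2:ℝ) - p₂) = L ^ (1 - p₂) * L := by
        rw [show (2:ℝ) - p₂ = (1 - p₂) + 1 from by ring, Real.rpow_add hL, Real.rpow_one]
      calc c * L = K₂ * (2 ^ (1 - p₂) * L ^ (1 - p₂)) * L := by rw [hc_def, hsplit]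
        _ = K₂ * 2 ^ (1 - p₂) * (L ^ (1 - p₂) * L) := by ring
        _ = K₂ * 2 ^ (1 - p₂) * (L ^ q * L ^ (1 - p₁)) := by rw [hLL, hL2]
        _ = K₂ * 2 ^ (1 - p₂) * L ^ q * L ^ (1 - p₁) := by ring
    have e2 : (p₁ - 1)⁻¹ * m ^ (1 - p₁) =
        (p₁ - 1)⁻¹ * (K₁ / 2) ^ (1 - p₁) * θ ^ (1 - p₁) * L ^ (1 - p₁) := by
      have : m = (K₁ / 2) * θ * L := by rw [hm_def]; ring
      rw [this, Real.mul_rpow (by positivity : (0:ℝ) ≤ K₁ / 2 * θ) hL.le,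
        Real.mul_rpow (by positivity : (0:ℝ) ≤ K₁ / 2) hθ.le]
      ring
    rw [e1, e2] at hstar
    have h3 : K₂ * 2 ^ (1 - p₂) * L ^ q ≤ (p₁ - 1)⁻¹ * (K₁ / 2) ^ (1 - p₁) * θ ^ (1 - p₁) :=
      le_of_mul_le_mul_right hstar hB
    have h2pos : (0:ℝ) < (2:ℝ) ^ (1 - p₂) := Real.rpow_pos_of_pos two_pos _
    have h22 : (2:ℝ) ^ (p₂ - 1) * (2:ℝ) ^ (1 - p₂) = 1 := by
      rw [← Real.rpow_add two_pos]
      norm_num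
    have h4 := mul_le_mul_of_nonneg_left h3 (by positivity : (0:ℝ) ≤ K₂⁻¹ * 2 ^ (p₂ - 1))
    have hKK : K₂⁻¹ * K₂ = 1 := inv_mul_cancel₀ (ne_of_gt hK₂)
    calc L ^ q = K₂⁻¹ * 2 ^ (p₂ - 1) * (K₂ * 2 ^ (1 - p₂) * L ^ q) := by
          rw [show K₂⁻¹ * (2:ℝ) ^ (p₂ - 1) * (K₂ * 2 ^ (1 - p₂) * L ^ q)
              = (K₂⁻¹ * K₂) * ((2:ℝ) ^ (p₂ - 1) * 2 ^ (1 - p₂)) * L ^ q from by ring,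
            hKK, h22, one_mul, one_mul]
      _ ≤ K₂⁻¹ * 2 ^ (p₂ - 1) * ((p₁ - 1)⁻¹ * (K₁ / 2) ^ (1 - p₁) * θ ^ (1 - p₁)) := h4
      _ = C * θ ^ (1 - p₁) := by rw [hC_def]; ring
  -- conclude
  have hfin : L ≤ C' * l := by
    have h5 : (L ^ q) ^ q⁻¹ ≤ (C * θ ^ (1 - p₁)) ^ q⁻¹ :=
      Real.rpow_le_rpow (by positivity) hLq (by positivity)
    rw [Real.rpow_rpow_inv hL.le (ne_of_gt hq)] at h5
    have h6 : (C * θ ^ (1 - p₁)) ^ q⁻¹ = C' * l := by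
      rw [Real.mul_rpow hC.le (by positivity), ← Real.rpow_mul hθ.le, hC'_def, hl_def]
      congr 1
      rw [hα_def]
      field_simp
      congr 1
      ring
    rw [h6] at h5
    exact h5
  have hLeq : L = (C' + 1) * l := by rw [hL_def, hK_def]; ring
  rw [hLeq] at hfin
  have hexpand : (C' + 1) * l - C' * l = l := by ring
  linarith
end
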